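/- Let m > 3 be odd and n even, and let G(i) ⊆ G_{m,n} be the subgraph induced by the stars S_{m(i)} and S_{m(i+n/2)}. There exists an assignment of labels to the 2m vertices of G(i), satisfying the radio labeling condition |f(u) − f(v)| ≥ n + 2 − d(u,v) (distances in G_{m,n}) for all distinct pairs in G(i), whose span is at most mn − n/2 + 2. -/

import Mathlib

/-- The star graph on `m` vertices with center `0`. -/
def starGraph (m : ℕ) : SimpleGraph (Fin m) :=
  SimpleGraph.fromRel (fun a _ => (a : ℕ) = 0)

/-- The path graph on `n` vertices `0, 1, …, n-1`. -/
def pathGraph' (n : ℕ) : SimpleGraph (Fin n) :=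
  SimpleGraph.fromRel (fun a b => (a : ℕ) + 1 = b)

/-- The stacked-book graph `G_{m,n} = S_m □ P_n`. -/
def bookGraph (m n : ℕ) : SimpleGraph (Fin m × Fin n) :=
  (starGraph m).boxProd (pathGraph' n)

/-- `f` is a radio labeling of `G` for diameter `D`:
`|f u - f v| ≥ D + 1 - d(u,v)` for all distinct `u, v`. -/
def IsRadioLabeling {V : Type*} (G : SimpleGraph V) (D : ℕ) (f : V → ℕ) : Prop :=
  ∀ u v : V, u ≠ v → (D : ℤ) + 1 - G.dist u v ≤ |(f u : ℤ) - (f v : ℤ)|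

/-- The span of a labeling: maximum label minus minimum label. -/
noncomputable def span {V : Type*} (f : V → ℕ) : ℕ :=
  sSup (Set.range f) - sInf (Set.range f)

/-- The radio number of the stacked-book graph `G_{m,n}` (whose diameter is `n+1`). -/
noncomputable def rnBook (m n : ℕ) : ℕ :=
  sInf {s | ∃ f : Fin m × Fin n → ℕ, IsRadioLabeling (bookGraph m n) (n + 1) f ∧ span f = s}

namespace RadioAux
open SimpleGraph

def sLB (a c : ℕ) : ℕ := if a = c then 0 else if a = 0 ∨ c = 0 then 1 else 2

lemma starGraph_adj {m : ℕ} {a b : Fin m} :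
    (_root_.starGraph m).Adj a b ↔ a ≠ b ∧ ((a : ℕ) = 0 ∨ (b : ℕ) = 0) := by
  simp [_root_.starGraph, SimpleGraph.fromRel_adj]

lemma pathGraph'_adj {n : ℕ} {a b : Fin n} :
    (pathGraph' n).Adj a b ↔ a ≠ b ∧ ((a : ℕ) + 1 = (b : ℕ) ∨ (b : ℕ) + 1 = (a : ℕ)) := by
  simp [pathGraph', SimpleGraph.fromRel_adj]

lemma starGraph_connected {m : ℕ} (hm : 0 < m) : (_root_.starGraph m).Connected := by
  have h0 : ∀ a : Fin m, (_root_.starGraph m).Reachable a ⟨0, hm⟩ := by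
    intro a
    by_cases ha : a = ⟨0, hm⟩
    · exact ha ▸ Reachable.refl _
    · exact (starGraph_adj.mpr ⟨ha, Or.inr rfl⟩).reachable
  haveI : Nonempty (Fin m) := ⟨⟨0, hm⟩⟩
  exact ⟨fun a b => (h0 a).trans (h0 b).symm⟩

lemma pathGraph'_connected {n : ℕ} (hn : 0 < n) : (pathGraph' n).Connected := by
  have h0 : ∀ j (hj : j < n), (pathGraph' n).Reachable ⟨0, hn⟩ ⟨j, hj⟩ := by
    intro j
    induction j with
    | zero => intro hj; exact Reachable.refl _
    | succ k ih =>
      intro hj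
      refine (ih (by omega)).trans (Adj.reachable ?_)
      exact pathGraph'_adj.mpr ⟨by simp [Fin.ext_iff], Or.inl rfl⟩
  haveI : Nonempty (Fin n) := ⟨⟨0, hn⟩⟩
  exact ⟨fun a b => (h0 a.1 a.2).symm.trans (h0 b.1 b.2)⟩

lemma bookGraph_connected {m n : ℕ} (hm : 0 < m) (hn : 0 < n) : (bookGraph m n).Connected :=
  (starGraph_connected hm).boxProd (pathGraph'_connected hn)

lemma walk_lb {m n : ℕ} : ∀ {u v : Fin m × Fin n} (p : (bookGraph m n).Walk u v),
    sLB (u.1 : ℕ) (v.1 : ℕ) + (((u.2 : ℕ) - (v.2 : ℕ)) + ((v.2 : ℕ) - (u.2 : ℕ))) ≤ p.length := by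
  intro u v p
  induction p with
  | nil => simp [sLB]
  | @cons x y z hadj q ih =>
    rw [SimpleGraph.Walk.length_cons]
    have hadj' : ((_root_.starGraph m).boxProd (pathGraph' n)).Adj x y := hadj
    rcases SimpleGraph.boxProd_adj.mp hadj' with ⟨hs, he⟩ | ⟨hp, he⟩
    · have h1 : (x.2 : ℕ) = (y.2 : ℕ) := by rw [he]
      obtain ⟨hne, hz⟩ := starGraph_adj.mp hs
      have h3 : (x.1 : ℕ) ≠ (y.1 : ℕ) := fun hh => hne (Fin.ext hh)
      simp only [sLB] at ih ⊢
      split_ifs at ih ⊢ <;> omega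
    · have h1 : (x.1 : ℕ) = (y.1 : ℕ) := by rw [he]
      obtain ⟨hne, hz⟩ := pathGraph'_adj.mp hp
      simp only [sLB] at ih ⊢
      split_ifs at ih ⊢ <;> omega

lemma dist_lb {m n : ℕ} (hm : 0 < m) (hn : 0 < n) (a c : Fin m) (b d : Fin n) :
    sLB (a : ℕ) (c : ℕ) + (((b : ℕ) - (d : ℕ)) + ((d : ℕ) - (b : ℕ)))
      ≤ (bookGraph m n).dist (a, b) (c, d) := by
  obtain ⟨p, hp⟩ := (bookGraph_connected hm hn).exists_walk_length_eq_dist (a, b) (c, d)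
  rw [← hp]; exact walk_lb p

lemma conclude {n L D fu fv : ℕ} (hLd : L ≤ D)
    (hgap : n + 2 + fu ≤ L + fv ∨ n + 2 + fv ≤ L + fu) :
    (n : ℤ) + 2 - (D : ℤ) ≤ |(fu : ℤ) - (fv : ℤ)| := by
  rcases le_total ((fu : ℤ) - fv) 0 with hs | hs
  · rw [abs_of_nonpos hs]; omega
  · rw [abs_of_nonneg hs]; omega

def T (m k : ℕ) : ℕ := (k + m - 4) % (m - 1) + 1

lemma T_eq {m k : ℕ} (hm : 3 < m) (h1 : 1 ≤ k) (h2 : k ≤ m - 1) :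
    T m k = if k ≤ 2 then k + m - 3 else k - 2 := by
  unfold T
  rcases le_or_gt k 2 with hk | hk
  · rw [Nat.mod_eq_of_lt (by omega)]; simp [hk]; omega
  · rw [Nat.mod_eq_sub_mod (by omega), Nat.mod_eq_of_lt (by omega)]
    rw [if_neg (by omega)]; omega

lemma T_pos {m k : ℕ} : 1 ≤ T m k := Nat.le_add_left 1 _

lemma T_le {m k : ℕ} (hm : 3 < m) (h1 : 1 ≤ k) (h2 : k ≤ m - 1) : T m k ≤ m - 1 := by
  rw [T_eq hm h1 h2]; split_ifs <;> omega

lemma T_inj {m a c : ℕ} (hm : 3 < m) (ha1 : 1 ≤ a) (ha2 : a ≤ m - 1)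
    (hc1 : 1 ≤ c) (hc2 : c ≤ m - 1) (heq : T m a = T m c) : a = c := by
  rw [T_eq hm ha1 ha2, T_eq hm hc1 hc2] at heq
  split_ifs at heq <;> omega

lemma T_spread {m k : ℕ} (hm : 3 < m) (h1 : 1 ≤ k) (h2 : k ≤ m - 1) :
    T m k + 2 ≤ k ∨ k + 1 ≤ T m k := by
  rw [T_eq hm h1 h2]; split_ifs <;> omega

end RadioAux

open RadioAux SimpleGraph in
theorem Gi_upper_bound_m_odd (m n : ℕ) (hm : 3 < m) (hmo : Odd m) (hn : n % 2 = 0)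
    (i : ℕ) (hi : i < n / 2) :
    ∃ f : Fin m × Fin n → ℕ,
      let S : Finset (Fin m × Fin n) :=
        Finset.univ.filter (fun p => (p.2 : ℕ) = i ∨ (p.2 : ℕ) = i + n / 2)
      (∀ u ∈ S, ∀ v ∈ S, u ≠ v →
        (n : ℤ) + 2 - (bookGraph m n).dist u v ≤ |(f u : ℤ) - (f v : ℤ)|) ∧
      sSup (f '' ↑S) - sInf (f '' ↑S) ≤ m * n - n / 2 + 2 := by
  classical
  have hm0 : 0 < m := by omega
  have hh0 : 0 < n / 2 := by omega
  have hn0 : 0 < n := by omega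
  set h := n / 2 with hhdef
  have hn2 : n = 2 * h := by omega
  have hmn1 : n ≤ m * n := Nat.le_mul_of_pos_left n hm0
  have hih : ¬ (i + h = i) := by omega
  set F : Fin m × Fin n → ℕ := fun p =>
    if (p.2 : ℕ) = i then
      (if (p.1 : ℕ) = 0 then 0 else 2 * T m (p.1 : ℕ) * h + 1)
    else if (p.2 : ℕ) = i + h then
      (if (p.1 : ℕ) = 0 then m * n - h + 2 else (2 * ((p.1 : ℕ) - 1) + 1) * h + 1)
    else 0 with hF
  refine ⟨F, ?_, ?_⟩
  · -- radio condition
    intro u hu v hv huv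
    obtain ⟨a, b⟩ := u
    obtain ⟨c, d⟩ := v
    simp only [Finset.mem_filter, Finset.mem_univ, true_and] at hu hv
    have ha' := a.isLt
    have hc' := c.isLt
    have hdl := dist_lb hm0 hn0 a c b d
    rcases hu with hb | hb <;> rcases hv with hd | hd
    · -- both in column i
      have hbd : b = d := Fin.ext (by omega)
      subst hbd
      have hacv : (a : ℕ) ≠ (c : ℕ) := by
        intro hh
        exact huv (by rw [Fin.ext hh])
      by_cases ha0 : (a : ℕ) = 0 <;> by_cases hc0 : (c : ℕ) = 0
      · omega
      · -- center, leaf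
        have hs : sLB (a : ℕ) (c : ℕ) = 1 := by simp only [sLB]; split_ifs <;> omega
        have hLd : 1 ≤ (bookGraph m n).dist (a, b) (c, b) := by omega
        have hFu : F (a, b) = 0 := by simp [hF, hb, ha0]
        have hFv : F (c, b) = 2 * T m (c : ℕ) * h + 1 := by simp [hF, hb, hc0]
        rw [hFu, hFv]
        refine conclude hLd (Or.inl ?_)
        have hmul : 2 * h ≤ 2 * T m (c : ℕ) * h :=
          mul_le_mul_left (by have := T_pos (m := m) (k := (c : ℕ)); omega) h
        omega
      · -- leaf, center
        have hs : sLB (a : ℕ) (c : ℕ) = 1 := by simp only [sLB]; split_ifs <;> omega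
        have hLd : 1 ≤ (bookGraph m n).dist (a, b) (c, b) := by omega
        have hFu : F (a, b) = 2 * T m (a : ℕ) * h + 1 := by simp [hF, hb, ha0]
        have hFv : F (c, b) = 0 := by simp [hF, hb, hc0]
        rw [hFu, hFv]
        refine conclude hLd (Or.inr ?_)
        have hmul : 2 * h ≤ 2 * T m (a : ℕ) * h :=
          mul_le_mul_left (by have := T_pos (m := m) (k := (a : ℕ)); omega) h
        omega
      · -- leaf, leaf
        have hs : sLB (a : ℕ) (c : ℕ) = 2 := by simp only [sLB]; split_ifs <;> omega
        have hLd : 2 ≤ (bookGraph m n).dist (a, b) (c, b) := by omega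
        have hFu : F (a, b) = 2 * T m (a : ℕ) * h + 1 := by simp [hF, hb, ha0]
        have hFv : F (c, b) = 2 * T m (c : ℕ) * h + 1 := by simp [hF, hb, hc0]
        rw [hFu, hFv]
        have hTne : T m (a : ℕ) ≠ T m (c : ℕ) := fun e =>
          hacv (T_inj hm (by omega) (by omega) (by omega) (by omega) e)
        rcases lt_or_gt_of_ne hTne with hlt | hlt
        · refine conclude hLd (Or.inl ?_)
          have hmul : (2 * T m (a : ℕ) + 2) * h ≤ 2 * T m (c : ℕ) * h :=
            mul_le_mul_left (by omega) h
          have e1 : (2 * T m (a : ℕ) + 2) * h = 2 * T m (a : ℕ) * h + 2 * h := by ring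
          omega
        · refine conclude hLd (Or.inr ?_)
          have hmul : (2 * T m (c : ℕ) + 2) * h ≤ 2 * T m (a : ℕ) * h :=
            mul_le_mul_left (by omega) h
          have e1 : (2 * T m (c : ℕ) + 2) * h = 2 * T m (c : ℕ) * h + 2 * h := by ring
          omega
    · -- u in column i, v in column i + h
      by_cases ha0 : (a : ℕ) = 0 <;> by_cases hc0 : (c : ℕ) = 0
      · have hs : sLB (a : ℕ) (c : ℕ) = 0 := by simp only [sLB]; split_ifs <;> omega
        have hLd : h ≤ (bookGraph m n).dist (a, b) (c, d) := by omega
        have hFu : F (a, b) = 0 := by simp [hF, hb, ha0]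
        have hFv : F (c, d) = m * n - h + 2 := by simp [hF, hd, hih, hh0.ne', hc0]
        rw [hFu, hFv]
        exact conclude hLd (Or.inl (by omega))
      · -- center i, leaf B
        obtain ⟨c', hc2⟩ : ∃ x, (c : ℕ) = x + 1 := ⟨(c : ℕ) - 1, by omega⟩
        have hs : sLB (a : ℕ) (c : ℕ) = 1 := by simp only [sLB]; split_ifs <;> omega
        have hLd : 1 + h ≤ (bookGraph m n).dist (a, b) (c, d) := by omega
        have hFu : F (a, b) = 0 := by simp [hF, hb, ha0]
        have hFv : F (c, d) = (2 * c' + 1) * h + 1 := by simp [hF, hd, hih, hh0.ne', hc0, hc2]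
        rw [hFu, hFv]
        refine conclude hLd (Or.inl ?_)
        have hmul : 1 * h ≤ (2 * c' + 1) * h := mul_le_mul_left (by omega) h
        have e1 : 1 * h = h := one_mul h
        omega
      · -- leaf i, center B
        have hs : sLB (a : ℕ) (c : ℕ) = 1 := by simp only [sLB]; split_ifs <;> omega
        have hLd : 1 + h ≤ (bookGraph m n).dist (a, b) (c, d) := by omega
        have hFu : F (a, b) = 2 * T m (a : ℕ) * h + 1 := by simp [hF, hb, ha0]
        have hFv : F (c, d) = m * n - h + 2 := by simp [hF, hd, hih, hh0.ne', hc0]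
        rw [hFu, hFv]
        refine conclude hLd (Or.inl ?_)
        have hT2 : T m (a : ℕ) ≤ m - 1 := T_le hm (by omega) (by omega)
        have hmul : (2 * T m (a : ℕ) + 2) * h ≤ (2 * m) * h := mul_le_mul_left (by omega) h
        have e1 : (2 * T m (a : ℕ) + 2) * h = 2 * T m (a : ℕ) * h + 2 * h := by ring
        have hC : (2 * m) * h = m * n := by rw [hn2]; ring
        omega
      · -- leaf i, leaf B
        obtain ⟨c', hc2⟩ : ∃ x, (c : ℕ) = x + 1 := ⟨(c : ℕ) - 1, by omega⟩
        have hFu : F (a, b) = 2 * T m (a : ℕ) * h + 1 := by simp [hF, hb, ha0]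
        have hFv : F (c, d) = (2 * c' + 1) * h + 1 := by simp [hF, hd, hih, hh0.ne', hc0, hc2]
        rw [hFu, hFv]
        by_cases hac : (a : ℕ) = (c : ℕ)
        · have hs : sLB (a : ℕ) (c : ℕ) = 0 := by simp only [sLB]; split_ifs <;> omega
          have hLd : h ≤ (bookGraph m n).dist (a, b) (c, d) := by omega
          rcases T_spread (m := m) (k := (a : ℕ)) hm (by omega) (by omega) with hsp | hsp
          · refine conclude hLd (Or.inl ?_)
            have hmul : (2 * T m (a : ℕ) + 3) * h ≤ (2 * c' + 1) * h :=
              mul_le_mul_left (by omega) h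
            have e1 : (2 * T m (a : ℕ) + 3) * h = 2 * T m (a : ℕ) * h + 2 * h + h := by ring
            omega
          · refine conclude hLd (Or.inr ?_)
            have hmul : (2 * c' + 1 + 3) * h ≤ 2 * T m (a : ℕ) * h :=
              mul_le_mul_left (by omega) h
            have e1 : (2 * c' + 1 + 3) * h = (2 * c' + 1) * h + 2 * h + h := by ring
            omega
        · have hs : sLB (a : ℕ) (c : ℕ) = 2 := by simp only [sLB]; split_ifs <;> omega
          have hLd : 2 + h ≤ (bookGraph m n).dist (a, b) (c, d) := by omega
          rcases le_or_gt (2 * T m (a : ℕ)) (2 * c' + 1) with hcmp | hcmp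
          · refine conclude hLd (Or.inl ?_)
            have hmul : (2 * T m (a : ℕ) + 1) * h ≤ (2 * c' + 1) * h :=
              mul_le_mul_left (by omega) h
            have e1 : (2 * T m (a : ℕ) + 1) * h = 2 * T m (a : ℕ) * h + h := by ring
            omega
          · refine conclude hLd (Or.inr ?_)
            have hmul : (2 * c' + 1 + 1) * h ≤ 2 * T m (a : ℕ) * h :=
              mul_le_mul_left (by omega) h
            have e1 : (2 * c' + 1 + 1) * h = (2 * c' + 1) * h + h := by ring
            omega
    · -- u in column i + h, v in column i  (mirror of previous)
      by_cases ha0 : (a : ℕ) = 0 <;> by_cases hc0 : (c : ℕ) = 0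
      · have hs : sLB (a : ℕ) (c : ℕ) = 0 := by simp only [sLB]; split_ifs <;> omega
        have hLd : h ≤ (bookGraph m n).dist (a, b) (c, d) := by omega
        have hFu : F (a, b) = m * n - h + 2 := by simp [hF, hb, hih, hh0.ne', ha0]
        have hFv : F (c, d) = 0 := by simp [hF, hd, hc0]
        rw [hFu, hFv]
        exact conclude hLd (Or.inr (by omega))
      · -- center B, leaf i
        have hs : sLB (a : ℕ) (c : ℕ) = 1 := by simp only [sLB]; split_ifs <;> omega
        have hLd : 1 + h ≤ (bookGraph m n).dist (a, b) (c, d) := by omega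
        have hFu : F (a, b) = m * n - h + 2 := by simp [hF, hb, hih, hh0.ne', ha0]
        have hFv : F (c, d) = 2 * T m (c : ℕ) * h + 1 := by simp [hF, hd, hc0]
        rw [hFu, hFv]
        refine conclude hLd (Or.inr ?_)
        have hT2 : T m (c : ℕ) ≤ m - 1 := T_le hm (by omega) (by omega)
        have hmul : (2 * T m (c : ℕ) + 2) * h ≤ (2 * m) * h := mul_le_mul_left (by omega) h
        have e1 : (2 * T m (c : ℕ) + 2) * h = 2 * T m (c : ℕ) * h + 2 * h := by ring
        have hC : (2 * m) * h = m * n := by rw [hn2]; ring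
        omega
      · -- leaf B, center i
        obtain ⟨a', ha2⟩ : ∃ x, (a : ℕ) = x + 1 := ⟨(a : ℕ) - 1, by omega⟩
        have hs : sLB (a : ℕ) (c : ℕ) = 1 := by simp only [sLB]; split_ifs <;> omega
        have hLd : 1 + h ≤ (bookGraph m n).dist (a, b) (c, d) := by omega
        have hFu : F (a, b) = (2 * a' + 1) * h + 1 := by simp [hF, hb, hih, hh0.ne', ha0, ha2]
        have hFv : F (c, d) = 0 := by simp [hF, hd, hc0]
        rw [hFu, hFv]
        refine conclude hLd (Or.inr ?_)
        have hmul : 1 * h ≤ (2 * a' + 1) * h := mul_le_mul_left (by omega) h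
        have e1 : 1 * h = h := one_mul h
        omega
      · -- leaf B, leaf i
        obtain ⟨a', ha2⟩ : ∃ x, (a : ℕ) = x + 1 := ⟨(a : ℕ) - 1, by omega⟩
        have hFu : F (a, b) = (2 * a' + 1) * h + 1 := by simp [hF, hb, hih, hh0.ne', ha0, ha2]
        have hFv : F (c, d) = 2 * T m (c : ℕ) * h + 1 := by simp [hF, hd, hc0]
        rw [hFu, hFv]
        by_cases hac : (a : ℕ) = (c : ℕ)
        · have hs : sLB (a : ℕ) (c : ℕ) = 0 := by simp only [sLB]; split_ifs <;> omega
          have hLd : h ≤ (bookGraph m n).dist (a, b) (c, d) := by omega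
          rcases T_spread (m := m) (k := (c : ℕ)) hm (by omega) (by omega) with hsp | hsp
          · refine conclude hLd (Or.inr ?_)
            have hmul : (2 * T m (c : ℕ) + 3) * h ≤ (2 * a' + 1) * h :=
              mul_le_mul_left (by omega) h
            have e1 : (2 * T m (c : ℕ) + 3) * h = 2 * T m (c : ℕ) * h + 2 * h + h := by ring
            omega
          · refine conclude hLd (Or.inl ?_)
            have hmul : (2 * a' + 1 + 3) * h ≤ 2 * T m (c : ℕ) * h :=
              mul_le_mul_left (by omega) h
            have e1 : (2 * a' + 1 + 3) * h = (2 * a' + 1) * h + 2 * h + h := by ring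
            omega
        · have hs : sLB (a : ℕ) (c : ℕ) = 2 := by simp only [sLB]; split_ifs <;> omega
          have hLd : 2 + h ≤ (bookGraph m n).dist (a, b) (c, d) := by omega
          rcases le_or_gt (2 * T m (c : ℕ)) (2 * a' + 1) with hcmp | hcmp
          · refine conclude hLd (Or.inr ?_)
            have hmul : (2 * T m (c : ℕ) + 1) * h ≤ (2 * a' + 1) * h :=
              mul_le_mul_left (by omega) h
            have e1 : (2 * T m (c : ℕ) + 1) * h = 2 * T m (c : ℕ) * h + h := by ring
            omega
          · refine conclude hLd (Or.inl ?_)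
            have hmul : (2 * a' + 1 + 1) * h ≤ 2 * T m (c : ℕ) * h :=
              mul_le_mul_left (by omega) h
            have e1 : (2 * a' + 1 + 1) * h = (2 * a' + 1) * h + h := by ring
            omega
    · -- both in column i + h
      have hbd : b = d := Fin.ext (by omega)
      subst hbd
      have hacv : (a : ℕ) ≠ (c : ℕ) := by
        intro hh
        exact huv (by rw [Fin.ext hh])
      by_cases ha0 : (a : ℕ) = 0 <;> by_cases hc0 : (c : ℕ) = 0
      · omega
      · -- center, leaf
        obtain ⟨c', hc2⟩ : ∃ x, (c : ℕ) = x + 1 := ⟨(c : ℕ) - 1, by omega⟩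
        have hs : sLB (a : ℕ) (c : ℕ) = 1 := by simp only [sLB]; split_ifs <;> omega
        have hLd : 1 ≤ (bookGraph m n).dist (a, b) (c, b) := by omega
        have hFu : F (a, b) = m * n - h + 2 := by simp [hF, hb, hih, hh0.ne', ha0]
        have hFv : F (c, b) = (2 * c' + 1) * h + 1 := by simp [hF, hb, hih, hh0.ne', hc0, hc2]
        rw [hFu, hFv]
        refine conclude hLd (Or.inr ?_)
        have hmul : (2 * c' + 1 + 3) * h ≤ (2 * m) * h := mul_le_mul_left (by omega) h
        have e1 : (2 * c' + 1 + 3) * h = (2 * c' + 1) * h + 3 * h := by ring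
        have hC : (2 * m) * h = m * n := by rw [hn2]; ring
        omega
      · -- leaf, center
        obtain ⟨a', ha2⟩ : ∃ x, (a : ℕ) = x + 1 := ⟨(a : ℕ) - 1, by omega⟩
        have hs : sLB (a : ℕ) (c : ℕ) = 1 := by simp only [sLB]; split_ifs <;> omega
        have hLd : 1 ≤ (bookGraph m n).dist (a, b) (c, b) := by omega
        have hFu : F (a, b) = (2 * a' + 1) * h + 1 := by simp [hF, hb, hih, hh0.ne', ha0, ha2]
        have hFv : F (c, b) = m * n - h + 2 := by simp [hF, hb, hih, hh0.ne', hc0]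
        rw [hFu, hFv]
        refine conclude hLd (Or.inl ?_)
        have hmul : (2 * a' + 1 + 3) * h ≤ (2 * m) * h := mul_le_mul_left (by omega) h
        have e1 : (2 * a' + 1 + 3) * h = (2 * a' + 1) * h + 3 * h := by ring
        have hC : (2 * m) * h = m * n := by rw [hn2]; ring
        omega
      · -- leaf, leaf
        obtain ⟨a', ha2⟩ : ∃ x, (a : ℕ) = x + 1 := ⟨(a : ℕ) - 1, by omega⟩
        obtain ⟨c', hc2⟩ : ∃ x, (c : ℕ) = x + 1 := ⟨(c : ℕ) - 1, by omega⟩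
        have hs : sLB (a : ℕ) (c : ℕ) = 2 := by simp only [sLB]; split_ifs <;> omega
        have hLd : 2 ≤ (bookGraph m n).dist (a, b) (c, b) := by omega
        have hFu : F (a, b) = (2 * a' + 1) * h + 1 := by simp [hF, hb, hih, hh0.ne', ha0, ha2]
        have hFv : F (c, b) = (2 * c' + 1) * h + 1 := by simp [hF, hb, hih, hh0.ne', hc0, hc2]
        rw [hFu, hFv]
        rcases lt_or_gt_of_ne (show a' ≠ c' by omega) with hlt | hlt
        · refine conclude hLd (Or.inl ?_)
          have hmul : (2 * a' + 1 + 2) * h ≤ (2 * c' + 1) * h := mul_le_mul_left (by omega) h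
          have e1 : (2 * a' + 1 + 2) * h = (2 * a' + 1) * h + 2 * h := by ring
          omega
        · refine conclude hLd (Or.inr ?_)
          have hmul : (2 * c' + 1 + 2) * h ≤ (2 * a' + 1) * h := mul_le_mul_left (by omega) h
          have e1 : (2 * c' + 1 + 2) * h = (2 * c' + 1) * h + 2 * h := by ring
          omega
  · -- span bound
    have hbd : ∀ p : Fin m × Fin n, F p ≤ m * n - h + 2 := by
      rintro ⟨a, b⟩
      have ha' := a.isLt
      by_cases h1 : (b : ℕ) = i
      · by_cases h2 : (a : ℕ) = 0
        · simp [hF, h1, h2]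
        · have hT2 : T m (a : ℕ) ≤ m - 1 := T_le hm (by omega) (by omega)
          have hFu : F (a, b) = 2 * T m (a : ℕ) * h + 1 := by simp [hF, h1, h2]
          rw [hFu]
          have hmul : (2 * T m (a : ℕ) + 2) * h ≤ (2 * m) * h := mul_le_mul_left (by omega) h
          have e1 : (2 * T m (a : ℕ) + 2) * h = 2 * T m (a : ℕ) * h + 2 * h := by ring
          have hC : (2 * m) * h = m * n := by rw [hn2]; ring
          omega
      · by_cases h3 : (b : ℕ) = i + h
        · by_cases h2 : (a : ℕ) = 0
          · simp [hF, h1, h3, h2, hh0.ne']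
          · obtain ⟨a', ha2⟩ : ∃ x, (a : ℕ) = x + 1 := ⟨(a : ℕ) - 1, by omega⟩
            have hFu : F (a, b) = (2 * a' + 1) * h + 1 := by
              simp [hF, h1, h3, h2, ha2, hh0.ne']
            rw [hFu]
            have hmul : (2 * a' + 1 + 3) * h ≤ (2 * m) * h := mul_le_mul_left (by omega) h
            have e1 : (2 * a' + 1 + 3) * h = (2 * a' + 1) * h + 3 * h := by ring
            have hC : (2 * m) * h = m * n := by rw [hn2]; ring
            omega
        · simp [hF, h1, h3]
    refine le_trans (Nat.sub_le _ _) (csSup_le ?_ ?_)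
    · exact ⟨F ((⟨0, hm0⟩ : Fin m), (⟨i, by omega⟩ : Fin n)),
        ⟨((⟨0, hm0⟩ : Fin m), (⟨i, by omega⟩ : Fin n)), by simp, rfl⟩⟩
    · rintro x ⟨p, hp, rfl⟩
      exact hbd p
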